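/- Singular Grönwall inequality: Let θ ∈ [0,1/2), C ≥ 0, and let u, h : [s,T] → [0,∞) be measurable and bounded with u(t) ≤ h(t) + C ∫_s^t (t-τ)^{-2θ} u(τ) dτ for all t ∈ [s,T]. Then there exists a constant M depending only on C, θ, T-s such that u(t) ≤ h(t) + M ∫_s^t (t-τ)^{-2θ} h(τ) dτ for all t ∈ [s,T], provided h is nondecreasing or, in general, u(t) ≤ M' sup_{τ∈[s,t]} h(τ) for a constant M' depending only on C, θ, T-s. -/

import Mathlib

open MeasureTheory Set

lemma sg_ker_val (p a c : ℝ) (hp : -1 < p) (hac : a ≤ c) :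
    ∫ τ in Ioo a c, (c - τ) ^ p = (c - a) ^ (p+1) / (p+1) := by
  rw [← integral_Ioc_eq_integral_Ioo, ← intervalIntegral.integral_of_le hac,
    intervalIntegral.integral_comp_sub_left (fun x => x ^ p) c, sub_self]
  rw [integral_rpow (Or.inl hp), Real.zero_rpow (by linarith)]
  ring

lemma sg_ker_int (p a c : ℝ) (hp : -1 < p) (hac : a ≤ c) :
    IntegrableOn (fun τ => (c - τ) ^ p) (Ioo a c) := by
  have h := (intervalIntegral.intervalIntegrable_rpow' hp (a := 0) (b := c - a)).comp_sub_left c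
  rw [sub_zero, sub_sub_cancel] at h
  exact ((intervalIntegrable_iff_integrableOn_Ioc_of_le hac).mp h.symm).mono_set
    Ioo_subset_Ioc_self

set_option maxHeartbeats 1000000 in
/-- Singular Grönwall inequality (Henry, Lemma 7.1.1): if
`u(t) ≤ h(t) + C ∫_s^t (t-τ)^{-2θ} u(τ) dτ` on `[s,T]` with `θ ∈ [0,1/2)`, `C ≥ 0`,
and `u, h` measurable, bounded and nonnegative, then there is a constant `M'`
depending only on `C, θ, T-s` with `u(t) ≤ M' · sup_{τ∈[s,t]} h(τ)` on `[s,T]`. -/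
theorem stmt_2 (θ C s T : ℝ) (hθ0 : 0 ≤ θ) (hθ : θ < 1/2) (hC : 0 ≤ C) (hsT : s ≤ T) :
    ∃ M' : ℝ, 0 < M' ∧
      ∀ u h : ℝ → ℝ, Measurable u → Measurable h →
        (∀ t, 0 ≤ u t) → (∀ t, 0 ≤ h t) →
        BddAbove (u '' Icc s T) → BddAbove (h '' Icc s T) →
        (∀ t ∈ Icc s T,
          u t ≤ h t + C * ∫ τ in Ioo s t, (t - τ) ^ (-(2*θ)) * u τ) →
        ∀ t ∈ Icc s T, u t ≤ M' * sSup (h '' Icc s t) := by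
  set p : ℝ := -(2*θ) with hpdef
  have hp : -1 < p := by rw [hpdef]; linarith
  have hp1 : 0 < p + 1 := by rw [hpdef]; linarith
  -- choice of the small step δ
  set δ : ℝ := ((p+1)/(2*(C+1))) ^ (1/(p+1)) with hδdef
  have hbase : 0 < (p+1)/(2*(C+1)) := by positivity
  have hδ0 : 0 < δ := Real.rpow_pos_of_pos hbase _
  have hδval : δ ^ (p+1) = (p+1)/(2*(C+1)) := by
    rw [hδdef, one_div, Real.rpow_inv_rpow hbase.le hp1.ne']
  have hδhalf : C * (δ ^ (p+1) / (p+1)) ≤ 1/2 := by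
    rw [hδval]
    have h2 : (p+1)/(2*(C+1))/(p+1) = 1/(2*(C+1)) := by
      field_simp
    rw [h2, mul_one_div, div_le_div_iff₀ (by positivity) (by norm_num)]
    nlinarith
  set K₀ : ℝ := (T - s) ^ (p+1) / (p+1) with hK₀def
  have hK0 : 0 ≤ K₀ := by
    apply div_nonneg _ hp1.le
    exact Real.rpow_nonneg (by linarith) _
  set B : ℝ := 4 + 2*C*K₀ with hBdef
  have hCK0 : 0 ≤ C * K₀ := mul_nonneg hC hK0
  have hB1 : 1 ≤ B := by rw [hBdef]; linarith
  have hB0 : 0 ≤ B := by linarith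
  set N : ℕ := ⌈(T - s)/δ⌉₊ with hNdef
  have hTN : T ≤ s + N * δ := by
    have h1 : (T - s)/δ ≤ (N : ℝ) := Nat.le_ceil _
    have h2 : T - s ≤ (N : ℝ) * δ := (div_le_iff₀ hδ0).mp h1
    linarith
  refine ⟨B ^ N, pow_pos (by linarith) N, ?_⟩
  intro u h hu hh hu0 hh0 hubdd hhbdd hyp t ht
  obtain ⟨hst, htT⟩ := ht
  set H := sSup (h '' Icc s t) with hHdef
  have hmemH : ∀ τ ∈ Icc s t, h τ ≤ H := fun τ hτ =>
    le_csSup (hhbdd.mono (image_mono (Icc_subset_Icc_right htT))) ⟨τ, hτ, rfl⟩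
  have hH0 : 0 ≤ H := (hh0 s).trans (hmemH s ⟨le_rfl, hst⟩)
  obtain ⟨U, hU⟩ := hubdd
  have hUb : ∀ τ ∈ Icc s T, u τ ≤ U := fun τ hτ => hU ⟨τ, hτ, rfl⟩
  have key : ∀ k : ℕ, ∀ t' ∈ Icc s t, t' ≤ s + k * δ → u t' ≤ B ^ k * H := by
    intro k
    induction k with
    | zero =>
      intro t' ht' hle
      push_cast at hle
      rw [zero_mul, add_zero] at hle
      have hts : t' = s := le_antisymm hle ht'.1
      subst hts
      have h1 := hyp t' ⟨le_rfl, hsT⟩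
      rw [Ioo_self, Measure.restrict_empty, integral_zero_measure, mul_zero, add_zero] at h1
      have h2 : h t' ≤ H := hmemH t' ⟨le_rfl, ht'.2⟩
      rw [pow_zero, one_mul]
      linarith
    | succ k IH =>
      intro t' ht' hle
      push_cast at hle
      set m : ℝ := s + k * δ with hmdef
      have hsm : s ≤ m := by
        have : (0:ℝ) ≤ k * δ := mul_nonneg (Nat.cast_nonneg k) hδ0.le
        linarith
      set b : ℝ := min t (s + ((k:ℝ)+1) * δ) with hbdef
      have hsb : s ≤ b := by
        refine le_min hst ?_
        have : (0:ℝ) ≤ ((k:ℝ)+1) * δ := mul_nonneg (by positivity) hδ0.le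
        linarith
      have hbt : b ≤ t := min_le_left _ _
      have hbT : b ≤ T := hbt.trans htT
      set S := sSup (u '' Icc s b) with hSdef
      have hSb : BddAbove (u '' Icc s b) := by
        refine ⟨U, ?_⟩
        rintro x ⟨τ, hτ, rfl⟩
        exact hUb τ ⟨hτ.1, hτ.2.trans hbT⟩
      have hSmem : ∀ τ ∈ Icc s b, u τ ≤ S := fun τ hτ => le_csSup hSb ⟨τ, hτ, rfl⟩
      have hS0 : 0 ≤ S := (hu0 s).trans (hSmem s ⟨le_rfl, hsb⟩)
      have hBk0 : 0 ≤ B ^ k * H := mul_nonneg (pow_nonneg hB0 k) hH0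
      have hBk1 : (1:ℝ) ≤ B ^ k := by
        calc (1:ℝ) = 1 ^ k := (one_pow k).symm
        _ ≤ B ^ k := pow_le_pow_left₀ (by norm_num) hB1 k
      have hCKBk : 0 ≤ C * K₀ * (B ^ k * H) := mul_nonneg hCK0 hBk0
      have main : ∀ t'' ∈ Icc s b, u t'' ≤ (H + C*K₀*(B^k*H) + B^k*H) + S/2 := by
        intro t'' ht''
        rcases le_or_gt t'' m with hcm | hcm
        · have h1 := IH t'' ⟨ht''.1, ht''.2.trans hbt⟩ hcm
          linarith
        · -- m < t''
          have hst'' : s < t'' := lt_of_le_of_lt hsm hcm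
          have ht''b : t'' ≤ b := ht''.2
          have ht''t : t'' ≤ t := ht''b.trans hbt
          have ht''T : t'' ≤ T := ht''t.trans htT
          have hker : IntegrableOn (fun τ => (t'' - τ) ^ p) (Ioo s t'') :=
            sg_ker_int p s t'' hp hst''.le
          have hint : IntegrableOn (fun τ => (t'' - τ) ^ p * u τ) (Ioo s t'') := by
            have hb' : ∀ᵐ x ∂(volume.restrict (Ioo s t'')), ‖u x‖ ≤ max U 0 := by
              refine (ae_restrict_iff' measurableSet_Ioo).2 (ae_of_all _ fun x hx => ?_)
              rw [Real.norm_eq_abs, abs_of_nonneg (hu0 x)]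
              exact le_max_of_le_left (hUb x ⟨hx.1.le, hx.2.le.trans ht''T⟩)
            have h2 := Integrable.bdd_mul (f := u) (c := max U 0) hker
              hu.aestronglyMeasurable.restrict hb'
            exact h2.congr (ae_of_all _ fun x => mul_comm _ _)
          have hsub1 : Ioc s m ⊆ Ioo s t'' := fun x hx => ⟨hx.1, lt_of_le_of_lt hx.2 hcm⟩
          have hsub2 : Ioo m t'' ⊆ Ioo s t'' := fun x hx => ⟨lt_of_le_of_lt hsm hx.1, hx.2⟩
          have hsplit : Ioo s t'' = Ioc s m ∪ Ioo m t'' := by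
            ext x
            simp only [mem_Ioo, mem_Ioc, mem_union]
            constructor
            · rintro ⟨h1, h2⟩
              rcases le_or_gt x m with h3 | h3
              · exact Or.inl ⟨h1, h3⟩
              · exact Or.inr ⟨h3, h2⟩
            · rintro (⟨h1, h2⟩ | ⟨h1, h2⟩)
              · exact ⟨h1, lt_of_le_of_lt h2 hcm⟩
              · exact ⟨lt_of_le_of_lt hsm h1, h2⟩
          have hdisj : Disjoint (Ioc s m) (Ioo m t'') := by
            rw [disjoint_left]
            rintro x ⟨_, h1⟩ ⟨h2, _⟩
            exact absurd h1 (not_le.2 h2)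
          have hIunion : ∫ τ in Ioo s t'', (t'' - τ) ^ p * u τ
              = (∫ τ in Ioc s m, (t'' - τ) ^ p * u τ)
                + ∫ τ in Ioo m t'', (t'' - τ) ^ p * u τ := by
            rw [hsplit]
            exact setIntegral_union hdisj measurableSet_Ioo
              (hint.mono_set hsub1) (hint.mono_set hsub2)
          -- bound on the first piece
          have hI1 : ∫ τ in Ioc s m, (t'' - τ) ^ p * u τ ≤ K₀ * (B ^ k * H) := by
            have step1 : ∫ τ in Ioc s m, (t'' - τ) ^ p * u τ
                ≤ ∫ τ in Ioc s m, (t'' - τ) ^ p * (B ^ k * H) := by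
              refine setIntegral_mono_on (hint.mono_set hsub1)
                ((sg_ker_int p s t'' hp hst''.le).mono_set hsub1 |>.mul_const _)
                measurableSet_Ioc (fun τ hτ => ?_)
              have hτt : τ ≤ t := le_trans hτ.2 (le_trans hcm.le ht''t)
              have huτ : u τ ≤ B ^ k * H := IH τ ⟨hτ.1.le, hτt⟩ hτ.2
              have hknn : (0:ℝ) ≤ (t'' - τ) ^ p :=
                Real.rpow_nonneg (by linarith [hτ.2, hcm]) p
              exact mul_le_mul_of_nonneg_left huτ hknn
            have step2 : ∫ τ in Ioc s m, (t'' - τ) ^ p * (B ^ k * H)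
                = (∫ τ in Ioc s m, (t'' - τ) ^ p) * (B ^ k * H) :=
              integral_mul_const _ _
            have step3 : ∫ τ in Ioc s m, (t'' - τ) ^ p
                ≤ ∫ τ in Ioo s t'', (t'' - τ) ^ p := by
              refine setIntegral_mono_set hker ?_ (HasSubset.Subset.eventuallyLE hsub1)
              refine (ae_restrict_iff' measurableSet_Ioo).2 (ae_of_all _ fun x hx => ?_)
              exact Real.rpow_nonneg (by linarith [hx.2]) p
            have step4 : ∫ τ in Ioo s t'', (t'' - τ) ^ p = (t'' - s) ^ (p+1) / (p+1) :=
              sg_ker_val p s t'' hp hst''.le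
            have step5 : (t'' - s) ^ (p+1) / (p+1) ≤ K₀ := by
              rw [hK₀def]
              gcongr <;> linarith
            calc ∫ τ in Ioc s m, (t'' - τ) ^ p * u τ
                ≤ (∫ τ in Ioc s m, (t'' - τ) ^ p) * (B ^ k * H) := by rw [← step2]; exact step1
              _ ≤ K₀ * (B ^ k * H) := by
                  refine mul_le_mul_of_nonneg_right ?_ hBk0
                  calc ∫ τ in Ioc s m, (t'' - τ) ^ p ≤ ∫ τ in Ioo s t'', (t'' - τ) ^ p := step3
                    _ = (t'' - s) ^ (p+1) / (p+1) := step4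
                    _ ≤ K₀ := step5
          -- bound on the second piece
          have hI2 : C * ∫ τ in Ioo m t'', (t'' - τ) ^ p * u τ ≤ S / 2 := by
            have step1 : ∫ τ in Ioo m t'', (t'' - τ) ^ p * u τ
                ≤ ∫ τ in Ioo m t'', (t'' - τ) ^ p * S := by
              refine setIntegral_mono_on (hint.mono_set hsub2)
                ((hker.mono_set hsub2).mul_const _) measurableSet_Ioo (fun τ hτ => ?_)
              have huτ : u τ ≤ S := hSmem τ ⟨le_trans hsm hτ.1.le, hτ.2.le.trans ht''b⟩
              exact mul_le_mul_of_nonneg_left huτ (Real.rpow_nonneg (by linarith [hτ.2]) p)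
            have step2 : ∫ τ in Ioo m t'', (t'' - τ) ^ p * S
                = ((t'' - m) ^ (p+1) / (p+1)) * S := by
              rw [integral_mul_const, sg_ker_val p m t'' hp hcm.le]
            have hq : t'' - m ≤ δ := by
              have h1 : t'' ≤ s + ((k:ℝ)+1) * δ := ht''b.trans (min_le_right _ _)
              rw [hmdef]; linarith [h1]
            have hq2 : (t'' - m) ^ (p+1) ≤ δ ^ (p+1) :=
              Real.rpow_le_rpow (by linarith [hcm]) hq hp1.le
            have hq3 : (t'' - m) ^ (p+1) / (p+1) ≤ δ ^ (p+1) / (p+1) := by gcongr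
            have hq0 : 0 ≤ (t'' - m) ^ (p+1) / (p+1) :=
              div_nonneg (Real.rpow_nonneg (by linarith [hcm]) _) hp1.le
            calc C * ∫ τ in Ioo m t'', (t'' - τ) ^ p * u τ
                ≤ C * (((t'' - m) ^ (p+1) / (p+1)) * S) := by
                  refine mul_le_mul_of_nonneg_left ?_ hC
                  rw [← step2]; exact step1
              _ = (C * ((t'' - m) ^ (p+1) / (p+1))) * S := by ring
              _ ≤ (1/2) * S := by
                  refine mul_le_mul_of_nonneg_right ?_ hS0
                  calc C * ((t'' - m) ^ (p+1) / (p+1)) ≤ C * (δ ^ (p+1) / (p+1)) :=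
                        mul_le_mul_of_nonneg_left hq3 hC
                    _ ≤ 1/2 := hδhalf
              _ = S / 2 := by ring
          have hhyp := hyp t'' ⟨hst''.le, ht''T⟩
          have hfinal : u t'' ≤ h t'' + C * (K₀ * (B ^ k * H)) + S / 2 := by
            have h3 : C * ∫ τ in Ioc s m, (t'' - τ) ^ p * u τ ≤ C * (K₀ * (B ^ k * H)) :=
              mul_le_mul_of_nonneg_left hI1 hC
            calc u t'' ≤ h t'' + C * ∫ τ in Ioo s t'', (t'' - τ) ^ p * u τ := hhyp
              _ = h t'' + ((C * ∫ τ in Ioc s m, (t'' - τ) ^ p * u τ)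
                  + C * ∫ τ in Ioo m t'', (t'' - τ) ^ p * u τ) := by rw [hIunion]; ring
              _ ≤ h t'' + C * (K₀ * (B ^ k * H)) + S / 2 := by linarith
          have hht'' : h t'' ≤ H := hmemH t'' ⟨ht''.1, ht''t⟩
          nlinarith [hfinal, hht'']
      have hSle : S ≤ (H + C*K₀*(B^k*H) + B^k*H) + S/2 := by
        refine csSup_le ?_ ?_
        · exact (nonempty_Icc.2 hsb).image u
        · rintro x ⟨τ, hτ, rfl⟩
          exact main τ hτ
      have hS2 : S ≤ 2*(H + C*K₀*(B^k*H) + B^k*H) := by linarith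
      have ht'b : t' ∈ Icc s b := ⟨ht'.1, le_min ht'.2 (by linarith [hle])⟩
      have h1 : u t' ≤ S := hSmem t' ht'b
      have h2 : B ^ (k+1) * H = (4 + 2*C*K₀) * (B ^ k * H) := by
        rw [pow_succ, hBdef]; ring
      have h3 : (0:ℝ) ≤ (B ^ k - 1) * H := mul_nonneg (by linarith [hBk1]) hH0
      nlinarith [h1, hS2, h2, h3, hCK0, hBk0]
  exact key N t ⟨hst, le_rfl⟩ (by linarith)
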